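/- For the symmetric group S_n, the linear span (inside the space of functions on matrix entries, i.e., the span of monomials x_{1,w(1)}⋯x_{n,w(n)} for w ∈ S_n) of all products Δ_{I_1,J_1}·Δ_{I_2,J_2}·Δ_{I_3,J_3} of triples of complementary minors has dimension equal to the number of 4321-avoiding permutations in S_n. -/

import Mathlib

open MvPolynomial

/-- The generic `n × n` matrix with entries the variables `x_{i,j}`. -/
noncomputable def genMatrix (n : ℕ) : Matrix (Fin n) (Fin n) (MvPolynomial (Fin n × Fin n) ℚ) :=
  fun i j => MvPolynomial.X (i, j)

/-- The minor `Δ_{I,J}` of the generic matrix, rows `I` and columns `J` in increasing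
order. -/
noncomputable def genMinor {n k : ℕ} (I J : Finset (Fin n)) (hI : I.card = k)
    (hJ : J.card = k) : MvPolynomial (Fin n × Fin n) ℚ :=
  ((genMatrix n).submatrix (I.orderEmbOfFin hI) (J.orderEmbOfFin hJ)).det

/-- The set of all products of triples of complementary minors of the generic matrix. -/
def TripleMinorProducts (n : ℕ) : Set (MvPolynomial (Fin n × Fin n) ℚ) :=
  {p | ∃ (k1 k2 k3 : ℕ) (I1 I2 I3 J1 J2 J3 : Finset (Fin n))
      (hI1 : I1.card = k1) (hJ1 : J1.card = k1) (hI2 : I2.card = k2) (hJ2 : J2.card = k2)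
      (hI3 : I3.card = k3) (hJ3 : J3.card = k3),
    I1 ∪ I2 ∪ I3 = Finset.univ ∧ Disjoint I1 I2 ∧ Disjoint I1 I3 ∧ Disjoint I2 I3 ∧
    J1 ∪ J2 ∪ J3 = Finset.univ ∧ Disjoint J1 J2 ∧ Disjoint J1 J3 ∧ Disjoint J2 J3 ∧
    p = genMinor I1 J1 hI1 hJ1 * genMinor I2 J2 hI2 hJ2 * genMinor I3 J3 hI3 hJ3}

/-- `w` avoids the pattern `4321`. -/
def Avoids4321 {n : ℕ} (w : Equiv.Perm (Fin n)) : Prop :=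
  ¬ ∃ i1 i2 i3 i4 : Fin n, i1 < i2 ∧ i2 < i3 ∧ i3 < i4 ∧
    w i2 < w i1 ∧ w i3 < w i2 ∧ w i4 < w i3

namespace RS

/-! ### Expansion of products of minors into permutation monomials -/

lemma prod_X_eq {τ : Type} {k : ℕ} (f : Fin k → τ) :
    (∏ i : Fin k, (X (f i) : MvPolynomial τ ℚ)) = monomial (∑ i, Finsupp.single (f i) 1) 1 := by
  induction k with
  | zero => simp
  | succ k ih =>
    rw [Fin.prod_univ_succ, Fin.sum_univ_succ, ih (fun i => f i.succ), X, monomial_mul, one_mul]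

lemma prod_monomial {τ ι : Type} (s : Finset ι) (e : ι → (τ →₀ ℕ)) (c : ι → ℚ) :
    (∏ m ∈ s, (monomial (e m) (c m) : MvPolynomial τ ℚ)) = monomial (∑ m ∈ s, e m) (∏ m ∈ s, c m) := by
  classical
  induction s using Finset.induction with
  | empty => simp
  | insert _ _ h ih => rw [Finset.prod_insert h, Finset.sum_insert h, Finset.prod_insert h, ih, monomial_mul]

/-- signed expansion of a minor -/
lemma minor_expand {n k : ℕ} (I J : Finset (Fin n)) (hI : I.card = k) (hJ : J.card = k) :
    genMinor I J hI hJ = ∑ σ : Equiv.Perm (Fin k),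
      ((Equiv.Perm.sign σ : ℤ) : ℚ) •
        monomial (∑ i, Finsupp.single (I.orderEmbOfFin hI (σ i), J.orderEmbOfFin hJ i) 1) (1 : ℚ) := by
  rw [genMinor, Matrix.det_apply]
  refine Finset.sum_congr rfl fun σ _ => ?_
  rw [← prod_X_eq (fun i => (I.orderEmbOfFin hI (σ i), J.orderEmbOfFin hJ i))]
  simp [Matrix.submatrix_apply, genMatrix, Units.smul_def, Int.cast_smul_eq_zsmul]

variable {n : ℕ}

/-- the exponent of the monomial `∏ i x_{i, w i}` -/
noncomputable def dmap (w : Equiv.Perm (Fin n)) : (Fin n × Fin n) →₀ ℕ :=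
  ∑ i, Finsupp.single (i, w i) 1

lemma dmap_apply (w : Equiv.Perm (Fin n)) (p q : Fin n) :
    dmap w (p, q) = if w p = q then 1 else 0 := by
  classical
  rw [dmap, Finsupp.finset_sum_apply]
  rw [Finset.sum_eq_single p]
  · simp [Finsupp.single_apply, Prod.ext_iff]
  · intro i _ hip
    simp only [Finsupp.single_apply, Prod.ext_iff, ite_eq_right_iff, one_ne_zero, imp_false,
      not_and]
    exact fun hc => absurd hc hip
  · simp

lemma dmap_injective : Function.Injective (dmap (n := n)) := by
  intro v w h
  ext i
  have h1 : dmap v (i, v i) = 1 := by simp [dmap_apply]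
  rw [h, dmap_apply] at h1
  by_contra hne
  rw [if_neg (fun hh => hne (congrArg _ hh.symm))] at h1
  exact one_ne_zero h1.symm

/-- the permutation monomial -/
noncomputable def mono (w : Equiv.Perm (Fin n)) : MvPolynomial (Fin n × Fin n) ℚ :=
  monomial (dmap w) 1

/-- the coefficient-extraction map, remembering only coefficients of permutation
monomials -/
noncomputable def phi (n : ℕ) : MvPolynomial (Fin n × Fin n) ℚ →ₗ[ℚ] (Equiv.Perm (Fin n) → ℚ) :=
  LinearMap.pi (fun w => lcoeff ℚ (dmap w))

lemma phi_apply (p : MvPolynomial (Fin n × Fin n) ℚ) (w : Equiv.Perm (Fin n)) :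
    phi n p w = coeff (dmap w) p := rfl

lemma phi_mono (v w : Equiv.Perm (Fin n)) :
    phi n (mono v) w = if v = w then 1 else 0 := by
  classical
  rw [phi_apply, mono, coeff_monomial]
  by_cases h : v = w
  · subst h; simp
  · rw [if_neg (fun hh => h (dmap_injective hh)), if_neg h]

/-- Data of a complementary triple of minors. -/
structure TD (n : ℕ) where
  k : Fin 3 → ℕ
  I : Fin 3 → Finset (Fin n)
  J : Fin 3 → Finset (Fin n)
  hI : ∀ m, (I m).card = k m
  hJ : ∀ m, (J m).card = k m
  hIu : I 0 ∪ I 1 ∪ I 2 = Finset.univ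
  hJu : J 0 ∪ J 1 ∪ J 2 = Finset.univ
  dI : ∀ m m', m ≠ m' → Disjoint (I m) (I m')
  dJ : ∀ m m', m ≠ m' → Disjoint (J m) (J m')

namespace TD

variable (t : TD n)

noncomputable def poly : MvPolynomial (Fin n × Fin n) ℚ :=
  genMinor (t.I 0) (t.J 0) (t.hI 0) (t.hJ 0) * genMinor (t.I 1) (t.J 1) (t.hI 1) (t.hJ 1) *
    genMinor (t.I 2) (t.J 2) (t.hI 2) (t.hJ 2)

noncomputable def eI (m : Fin 3) : Fin (t.k m) ↪o Fin n := (t.I m).orderEmbOfFin (t.hI m)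
noncomputable def eJ (m : Fin 3) : Fin (t.k m) ↪o Fin n := (t.J m).orderEmbOfFin (t.hJ m)

/-- the type of triples of permutations of the blocks -/
abbrev S := (m : Fin 3) → Equiv.Perm (Fin (t.k m))

noncomputable def DD (σ : t.S) : (Fin n × Fin n) →₀ ℕ :=
  ∑ m, ∑ i, Finsupp.single (t.eI m (σ m i), t.eJ m i) 1

noncomputable def sgn (σ : t.S) : ℚ := ∏ m, ((Equiv.Perm.sign (σ m) : ℤ) : ℚ)

lemma sgn_ne_zero (σ : t.S) : t.sgn σ ≠ 0 := by
  refine Finset.prod_ne_zero_iff.2 fun m _ => ?_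
  rcases Int.units_eq_one_or (Equiv.Perm.sign (σ m)) with h | h <;> simp [h]

lemma poly_expand : t.poly = ∑ σ : t.S, t.sgn σ • monomial (t.DD σ) (1 : ℚ) := by
  classical
  have h3 : t.poly = ∏ m : Fin 3, genMinor (t.I m) (t.J m) (t.hI m) (t.hJ m) := by
    rw [Fin.prod_univ_three]; rfl
  have hm : ∀ m : Fin 3, genMinor (t.I m) (t.J m) (t.hI m) (t.hJ m)
      = ∑ σm : Equiv.Perm (Fin (t.k m)),
        monomial (∑ i, Finsupp.single (t.eI m (σm i), t.eJ m i) 1)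
          (((Equiv.Perm.sign σm : ℤ) : ℚ)) := by
    intro m; rw [minor_expand]
    refine Finset.sum_congr rfl fun σm _ => ?_
    rw [smul_monomial, smul_eq_mul, mul_one]; rfl
  rw [h3]
  simp_rw [hm]
  rw [Finset.prod_univ_sum]
  rw [Fintype.piFinset_univ]
  refine Finset.sum_congr rfl fun σ _ => ?_
  rw [prod_monomial, smul_monomial, smul_eq_mul, mul_one]
  rfl

/-- every element of `Fin n` lies in exactly one row block -/
lemma blk_unique {x : Fin n} {m m' : Fin 3} (h : x ∈ t.I m) (h' : x ∈ t.I m') : m = m' := by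
  by_contra hne
  exact Finset.disjoint_left.1 (t.dI m m' hne) h h'

lemma blk_exists (x : Fin n) : ∃ m, x ∈ t.I m := by
  have : x ∈ t.I 0 ∪ t.I 1 ∪ t.I 2 := t.hIu ▸ Finset.mem_univ x
  rcases Finset.mem_union.1 this with h | h
  · rcases Finset.mem_union.1 h with h | h
    exacts [⟨0, h⟩, ⟨1, h⟩]
  · exact ⟨2, h⟩

lemma card_sum : t.k 0 + t.k 1 + t.k 2 = n := by
  have d01 := t.dI 0 1 (by decide)
  have d2 : Disjoint (t.I 0 ∪ t.I 1) (t.I 2) :=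
    Finset.disjoint_union_left.2 ⟨t.dI 0 2 (by decide), t.dI 1 2 (by decide)⟩
  have := congrArg Finset.card t.hIu
  rw [Finset.card_union_of_disjoint d2, Finset.card_union_of_disjoint d01] at this
  simpa [t.hI, Finset.card_fin] using this

lemma mem_eI (m : Fin 3) (i : Fin (t.k m)) : t.eI m i ∈ t.I m :=
  Finset.orderEmbOfFin_mem _ _ _

lemma mem_eJ (m : Fin 3) (i : Fin (t.k m)) : t.eJ m i ∈ t.J m :=
  Finset.orderEmbOfFin_mem _ _ _

noncomputable def eAf (σ : t.S) : ((m : Fin 3) × Fin (t.k m)) → Fin n :=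
  fun a => t.eI a.1 (σ a.1 a.2)

noncomputable def eBf : ((m : Fin 3) × Fin (t.k m)) → Fin n := fun a => t.eJ a.1 a.2

lemma card_sigma_eq : Fintype.card ((m : Fin 3) × Fin (t.k m)) = Fintype.card (Fin n) := by
  rw [Fintype.card_sigma]
  simp only [Fintype.card_fin]
  rw [Fin.sum_univ_three, t.card_sum]

lemma eAf_bijective (σ : t.S) : Function.Bijective (t.eAf σ) := by
  rw [Fintype.bijective_iff_injective_and_card]
  refine ⟨?_, t.card_sigma_eq⟩
  rintro ⟨m, i⟩ ⟨m', i'⟩ h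
  have hmem' : t.eAf σ ⟨m', i'⟩ ∈ t.I m' := t.mem_eI m' (σ m' i')
  rw [← h] at hmem'
  have hmm : m = m' := t.blk_unique (t.mem_eI m (σ m i)) hmem'
  subst hmm
  have : σ m i = σ m i' := (t.eI m).injective h
  exact Sigma.ext rfl (heq_of_eq ((σ m).injective this))

lemma eBf_bijective : Function.Bijective t.eBf := by
  rw [Fintype.bijective_iff_injective_and_card]
  refine ⟨?_, t.card_sigma_eq⟩
  rintro ⟨m, i⟩ ⟨m', i'⟩ h
  have hmem' : t.eBf ⟨m', i'⟩ ∈ t.J m' := t.mem_eJ m' i'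
  rw [← h] at hmem'
  have hmm : m = m' := by
    by_contra hne
    exact Finset.disjoint_left.1 (t.dJ m m' hne) (t.mem_eJ m i) hmem'
  subst hmm
  exact Sigma.ext rfl (heq_of_eq ((t.eJ m).injective h))

/-- The permutation of `Fin n` determined by a triple of block permutations. -/
noncomputable def perm (σ : t.S) : Equiv.Perm (Fin n) :=
  (Equiv.ofBijective _ (t.eAf_bijective σ)).symm.trans (Equiv.ofBijective _ t.eBf_bijective)

lemma perm_eAf (σ : t.S) (a : (m : Fin 3) × Fin (t.k m)) :
    t.perm σ (t.eAf σ a) = t.eBf a := by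
  have : t.eAf σ a = Equiv.ofBijective _ (t.eAf_bijective σ) a := rfl
  rw [perm, Equiv.trans_apply, this, Equiv.symm_apply_apply]
  rfl

lemma perm_spec (σ : t.S) (m : Fin 3) (i : Fin (t.k m)) :
    t.perm σ (t.eI m (σ m i)) = t.eJ m i :=
  t.perm_eAf σ ⟨m, i⟩

lemma DD_eq_dmap (σ : t.S) : t.DD σ = dmap (t.perm σ) := by
  have h1 : t.DD σ = ∑ a : (m : Fin 3) × Fin (t.k m),
      Finsupp.single (t.eAf σ a, t.eBf a) 1 := by
    rw [DD]
    conv_rhs => rw [← Finset.univ_sigma_univ]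
    rw [Finset.sum_sigma]
    rfl
  rw [h1, dmap]
  have h2 : ∀ a, (Finsupp.single (t.eAf σ a, t.eBf a) (1 : ℕ))
      = Finsupp.single (t.eAf σ a, t.perm σ (t.eAf σ a)) 1 := by
    intro a; rw [t.perm_eAf]
  simp_rw [h2]
  exact Function.Bijective.sum_comp (t.eAf_bijective σ)
    (fun x => Finsupp.single (x, t.perm σ x) 1)

/-- the compatibility condition -/
def Compat (w : Equiv.Perm (Fin n)) : Prop := ∀ m, ∀ x ∈ t.I m, w x ∈ t.J m

/-- the combinatorial condition for a triple of block permutations to produce the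
permutation monomial of `w` -/
def Cond (w : Equiv.Perm (Fin n)) (σ : t.S) : Prop :=
  ∀ m, ∀ i, w (t.eI m (σ m i)) = t.eJ m i

noncomputable instance (w : Equiv.Perm (Fin n)) (σ : t.S) : Decidable (t.Cond w σ) := by
  unfold Cond; infer_instance

lemma cond_iff_perm_eq (w : Equiv.Perm (Fin n)) (σ : t.S) :
    t.Cond w σ ↔ t.perm σ = w := by
  constructor
  · intro h
    ext x
    obtain ⟨a, rfl⟩ := (t.eAf_bijective σ).surjective x
    rw [t.perm_eAf]
    rcases a with ⟨m, i⟩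
    have hx : t.eAf σ ⟨m, i⟩ = t.eI m (σ m i) := rfl
    rw [hx, h m i]
    rfl
  · rintro rfl m i
    exact t.perm_spec σ m i

lemma cond_unique {w : Equiv.Perm (Fin n)} {σ σ' : t.S} (h : t.Cond w σ)
    (h' : t.Cond w σ') : σ = σ' := by
  funext m
  ext i
  have := (h m i).trans (h' m i).symm
  exact congrArg Fin.val ((t.eI m).injective (w.injective this))

lemma cond_compat {w : Equiv.Perm (Fin n)} {σ : t.S} (h : t.Cond w σ) : t.Compat w := by
  intro m x hx
  have : x ∈ Set.range (t.eI m) := by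
    rw [eI, Finset.range_orderEmbOfFin]; exact hx
  obtain ⟨j, rfl⟩ := this
  have := h m ((σ m)⁻¹ j)
  rw [Equiv.Perm.inv_def, Equiv.apply_symm_apply] at this
  rw [this]
  exact t.mem_eJ m _

lemma compat_cond_m {w : Equiv.Perm (Fin n)} (h : t.Compat w) (m : Fin 3) :
    ∃ σm : Equiv.Perm (Fin (t.k m)), ∀ i, w (t.eI m (σm i)) = t.eJ m i := by
  classical
  have hmem : ∀ i : Fin (t.k m), w (t.eI m i) ∈ t.J m := fun i => h m _ (t.mem_eI m i)
  set g : Fin (t.k m) → Fin (t.k m) :=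
    fun i => ((t.J m).orderIsoOfFin (t.hJ m)).symm ⟨w (t.eI m i), hmem i⟩ with hg
  have key : ∀ z, t.eJ m (g z) = w (t.eI m z) := by
    intro z
    have h1 : ((t.J m).orderIsoOfFin (t.hJ m)) (g z) = ⟨w (t.eI m z), hmem z⟩ := by
      rw [hg]; exact OrderIso.apply_symm_apply _ _
    have h2 := congrArg Subtype.val h1
    rw [eJ, ← Finset.coe_orderIsoOfFin_apply]
    exact h2
  have hginj : Function.Injective g := by
    intro i i' hii
    apply (t.eI m).injective
    apply w.injective
    rw [← key i, ← key i', hii]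
  have hgbij : Function.Bijective g := Finite.injective_iff_bijective.1 hginj
  refine ⟨(Equiv.ofBijective g hgbij).symm, fun i => ?_⟩
  rw [← key ((Equiv.ofBijective g hgbij).symm i)]
  rw [show g ((Equiv.ofBijective g hgbij).symm i) = i from
    (Equiv.ofBijective g hgbij).apply_symm_apply i]

lemma compat_cond {w : Equiv.Perm (Fin n)} (h : t.Compat w) : ∃ σ, t.Cond w σ := by
  choose σ hσ using t.compat_cond_m h
  exact ⟨σ, hσ⟩

lemma phi_poly (w : Equiv.Perm (Fin n)) :
    phi n t.poly w = ∑ σ : t.S, (if t.Cond w σ then t.sgn σ else 0) := by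
  classical
  rw [phi_apply, t.poly_expand]
  rw [MvPolynomial.coeff_sum]
  refine Finset.sum_congr rfl fun σ _ => ?_
  rw [coeff_smul, coeff_monomial]
  have hiff : (t.DD σ = dmap w) ↔ t.Cond w σ := by
    rw [t.DD_eq_dmap, dmap_injective.eq_iff, t.cond_iff_perm_eq]
  by_cases h : t.Cond w σ
  · rw [if_pos (hiff.2 h), if_pos h, smul_eq_mul, mul_one]
  · rw [if_neg (fun hh => h (hiff.1 hh)), if_neg h, smul_eq_mul, mul_zero]

lemma phi_poly_of_cond {w : Equiv.Perm (Fin n)} {σ : t.S} (h : t.Cond w σ) :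
    phi n t.poly w = t.sgn σ := by
  classical
  rw [t.phi_poly]
  rw [Finset.sum_eq_single σ]
  · rw [if_pos h]
  · intro σ' _ hne
    rw [if_neg (fun h' => hne (t.cond_unique h' h))]
  · intro hmem; exact absurd (Finset.mem_univ σ) hmem

lemma phi_poly_ne_zero {w : Equiv.Perm (Fin n)} (h : t.Compat w) : phi n t.poly w ≠ 0 := by
  obtain ⟨σ, hσ⟩ := t.compat_cond h
  rw [t.phi_poly_of_cond hσ]
  exact t.sgn_ne_zero σ

lemma phi_poly_eq_zero {w : Equiv.Perm (Fin n)} (h : ¬ t.Compat w) : phi n t.poly w = 0 := by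
  classical
  rw [t.phi_poly]
  refine Finset.sum_eq_zero fun σ _ => ?_
  rw [if_neg (fun hc => h (t.cond_compat hc))]

lemma compat_mul_swap {w : Equiv.Perm (Fin n)} {p p' : Fin n} {m : Fin 3}
    (hp : p ∈ t.I m) (hp' : p' ∈ t.I m) (h : t.Compat w) :
    t.Compat (w * Equiv.swap p p') := by
  intro m' x hx
  rw [Equiv.Perm.mul_apply]
  rcases eq_or_ne x p with rfl | hxp
  · have hm : m' = m := t.blk_unique hx hp
    subst hm
    rw [Equiv.swap_apply_left]
    exact h m' p' hp'
  rcases eq_or_ne x p' with rfl | hxp'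
  · have hm : m' = m := t.blk_unique hx hp'
    subst hm
    rw [Equiv.swap_apply_right]
    exact h m' p hp
  · rw [Equiv.swap_apply_of_ne_of_ne hxp hxp']
    exact h m' x hx

lemma phi_poly_mul_swap (w : Equiv.Perm (Fin n)) {p p' : Fin n} {m : Fin 3}
    (hp : p ∈ t.I m) (hp' : p' ∈ t.I m) (hne : p ≠ p') :
    phi n t.poly (w * Equiv.swap p p') = - phi n t.poly w := by
  classical
  by_cases h : t.Compat w
  · obtain ⟨σ, hσ⟩ := t.compat_cond h
    have hpr : p ∈ Set.range (t.eI m) := by rw [eI, Finset.range_orderEmbOfFin]; exact hp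
    have hpr' : p' ∈ Set.range (t.eI m) := by rw [eI, Finset.range_orderEmbOfFin]; exact hp'
    obtain ⟨a, rfl⟩ := hpr
    obtain ⟨b, rfl⟩ := hpr'
    have hab : a ≠ b := fun hh => hne (congrArg _ hh)
    have key : ∀ x, Equiv.swap (t.eI m a) (t.eI m b) (t.eI m x) = t.eI m (Equiv.swap a b x) := by
      intro x
      rcases eq_or_ne x a with rfl | hxa
      · rw [Equiv.swap_apply_left, Equiv.swap_apply_left]
      rcases eq_or_ne x b with rfl | hxb
      · rw [Equiv.swap_apply_right, Equiv.swap_apply_right]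
      · rw [Equiv.swap_apply_of_ne_of_ne (fun hh => hxa ((t.eI m).injective hh))
          (fun hh => hxb ((t.eI m).injective hh)),
          Equiv.swap_apply_of_ne_of_ne hxa hxb]
    set σ' : t.S := Function.update σ m (Equiv.swap a b * σ m) with hσ'def
    have hσ' : t.Cond (w * Equiv.swap (t.eI m a) (t.eI m b)) σ' := by
      intro m' i
      rcases eq_or_ne m' m with rfl | hm'
      · have hupd : σ' m' = Equiv.swap a b * σ m' := by
          rw [hσ'def, Function.update_self]
        rw [hupd, Equiv.Perm.mul_apply, Equiv.Perm.mul_apply, key, Equiv.swap_apply_self]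
        exact hσ m' i
      · have hupd : σ' m' = σ m' := by
          rw [hσ'def, Function.update_of_ne hm']
        rw [hupd, Equiv.Perm.mul_apply]
        have hne1 : t.eI m' (σ m' i) ≠ t.eI m a := fun hh =>
          Finset.disjoint_left.1 (t.dI m' m hm') (t.mem_eI m' (σ m' i)) (hh ▸ t.mem_eI m a)
        have hne2 : t.eI m' (σ m' i) ≠ t.eI m b := fun hh =>
          Finset.disjoint_left.1 (t.dI m' m hm') (t.mem_eI m' (σ m' i)) (hh ▸ t.mem_eI m b)
        rw [Equiv.swap_apply_of_ne_of_ne hne1 hne2]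
        exact hσ m' i
    rw [t.phi_poly_of_cond hσ, t.phi_poly_of_cond hσ']
    have hsgn : ∀ m', Equiv.Perm.sign (σ' m') =
        (if m' = m then -1 else 1) * Equiv.Perm.sign (σ m') := by
      intro m'
      rcases eq_or_ne m' m with rfl | hm'
      · rw [if_pos rfl, hσ'def, Function.update_self, Equiv.Perm.sign_mul,
          Equiv.Perm.sign_swap hab]
      · rw [if_neg hm', hσ'def, Function.update_of_ne hm', one_mul]
    rw [sgn, sgn]
    have hc : ∀ m', ((Equiv.Perm.sign (σ' m') : ℤ) : ℚ)
        = (if m' = m then (-1 : ℚ) else 1) * ((Equiv.Perm.sign (σ m') : ℤ) : ℚ) := by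
      intro m'
      rw [hsgn m']
      split <;> push_cast <;> ring
    simp_rw [hc]
    rw [Finset.prod_mul_distrib]
    have hprod : (∏ m' : Fin 3, (if m' = m then (-1 : ℚ) else 1)) = -1 := by
      rw [Finset.prod_ite_eq' Finset.univ m (fun _ => (-1 : ℚ))]
      rw [if_pos (Finset.mem_univ m)]
    rw [hprod, neg_one_mul]
  · have h2 : ¬ t.Compat (w * Equiv.swap p p') := by
      intro hc
      have := t.compat_mul_swap hp hp' hc
      rw [mul_assoc, Equiv.swap_mul_self, mul_one] at this
      exact h this
    rw [t.phi_poly_eq_zero h, t.phi_poly_eq_zero h2, neg_zero]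

lemma poly_mem_span : t.poly ∈ Submodule.span ℚ (Set.range (mono (n := n))) := by
  rw [t.poly_expand]
  refine Submodule.sum_mem _ fun σ _ => Submodule.smul_mem _ _ ?_
  refine Submodule.subset_span ⟨t.perm σ, ?_⟩
  rw [mono, t.DD_eq_dmap]

end TD

/-! ### Generic linear algebra over a finite coordinate type -/

section LinAlg

variable {X : Type*} [Fintype X] {L : Type*} [LinearOrder L] {κ : Type*}

omit [Fintype X] in
/-- vectors with distinct leading (minimal-support) coordinates are independent -/
lemma linIndep_of_leading (fL : X → L) (hfL : Function.Injective fL)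
    (v : κ → (X → ℚ)) (ℓ : κ → X) (hinj : Function.Injective ℓ)
    (h0 : ∀ a, v a (ℓ a) ≠ 0) (hlt : ∀ a x, fL x < fL (ℓ a) → v a x = 0) :
    LinearIndependent ℚ v := by
  classical
  rw [linearIndependent_iff']
  intro s
  induction s using Finset.strongInduction with
  | _ s ih =>
    intro g hsum i hi
    have hne : s.Nonempty := ⟨i, hi⟩
    rcases Finset.exists_min_image s (fun a => fL (ℓ a)) hne with ⟨a0, ha0s, hmin⟩
    have hga0 : g a0 = 0 := by
      have hev := congrFun hsum (ℓ a0)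
      rw [Finset.sum_apply] at hev
      simp only [Pi.smul_apply, smul_eq_mul, Pi.zero_apply] at hev
      have hterm : ∀ a ∈ s.erase a0, g a * v a (ℓ a0) = 0 := by
        intro a ha
        have has := Finset.mem_of_mem_erase ha
        have hne' := Finset.ne_of_mem_erase ha
        have hlla : fL (ℓ a0) < fL (ℓ a) := by
          rcases lt_or_eq_of_le (hmin a has) with h | h
          · exact h
          · exact absurd (hinj (hfL h)) (Ne.symm hne')
        rw [hlt a (ℓ a0) hlla, mul_zero]
      rw [← Finset.add_sum_erase _ _ ha0s, Finset.sum_eq_zero hterm, add_zero] at hev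
      rcases mul_eq_zero.1 hev with h | h
      · exact h
      · exact absurd h (h0 a0)
    rcases eq_or_ne i a0 with rfl | hne'
    · exact hga0
    · refine ih (s.erase a0) (Finset.erase_ssubset ha0s) g ?_ i (Finset.mem_erase.2 ⟨hne', hi⟩)
      rw [← Finset.add_sum_erase _ _ ha0s, hga0, zero_smul, zero_add] at hsum
      exact hsum

/-- the rational dot product -/
def dotq (u v : X → ℚ) : ℚ := ∑ x, u x * v x

lemma dotq_self_eq_zero {u : X → ℚ} (h : dotq u u = 0) : u = 0 := by
  have hnn : ∀ x ∈ Finset.univ, (0 : ℚ) ≤ u x * u x := fun x _ => mul_self_nonneg _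
  funext x
  have := (Finset.sum_eq_zero_iff_of_nonneg hnn).1 h x (Finset.mem_univ x)
  exact mul_self_eq_zero.1 this

lemma dotq_span_orth {S T : Set (X → ℚ)} (h : ∀ u ∈ S, ∀ v ∈ T, dotq u v = 0) :
    ∀ u ∈ Submodule.span ℚ S, ∀ v ∈ Submodule.span ℚ T, dotq u v = 0 := by
  have hadd : ∀ u₁ u₂ v : X → ℚ, dotq (u₁ + u₂) v = dotq u₁ v + dotq u₂ v := by
    intro u₁ u₂ v; rw [dotq, dotq, dotq, ← Finset.sum_add_distrib]
    exact Finset.sum_congr rfl fun x _ => by simp [add_mul]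
  have hsmul : ∀ (a : ℚ) (u v : X → ℚ), dotq (a • u) v = a * dotq u v := by
    intro a u v; rw [dotq, dotq, Finset.mul_sum]
    exact Finset.sum_congr rfl fun x _ => by simp [mul_assoc]
  have hadd' : ∀ u v₁ v₂ : X → ℚ, dotq u (v₁ + v₂) = dotq u v₁ + dotq u v₂ := by
    intro u v₁ v₂; rw [dotq, dotq, dotq, ← Finset.sum_add_distrib]
    exact Finset.sum_congr rfl fun x _ => by simp [mul_add]
  have hsmul' : ∀ (a : ℚ) (u v : X → ℚ), dotq u (a • v) = a * dotq u v := by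
    intro a u v; rw [dotq, dotq, Finset.mul_sum]
    exact Finset.sum_congr rfl fun x _ => by simp; ring
  intro u hu
  induction hu using Submodule.span_induction with
  | mem u hu =>
    intro v hv
    induction hv using Submodule.span_induction with
    | mem v hv => exact h _ hu _ hv
    | zero => simp [dotq]
    | add v₁ v₂ _ _ h1 h2 => rw [hadd' _ v₁ v₂, h1, h2, add_zero]
    | smul a v _ h1 => rw [hsmul' a _ v, h1, mul_zero]
  | zero => intro v hv; simp [dotq]
  | add u₁ u₂ _ _ h1 h2 => intro v hv; rw [hadd u₁ u₂ v, h1 v hv, h2 v hv, add_zero]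
  | smul a u _ h1 => intro v hv; rw [hsmul a u v, h1 v hv, mul_zero]

lemma finrank_add_finrank_le_card {S T : Set (X → ℚ)}
    (h : ∀ u ∈ S, ∀ v ∈ T, dotq u v = 0) :
    Module.finrank ℚ ↥(Submodule.span ℚ S) + Module.finrank ℚ ↥(Submodule.span ℚ T)
      ≤ Fintype.card X := by
  have horth := dotq_span_orth h
  have hinf : Submodule.span ℚ S ⊓ Submodule.span ℚ T = ⊥ := by
    rw [eq_bot_iff]
    rintro z ⟨hz1, hz2⟩
    exact dotq_self_eq_zero (horth z hz1 z hz2)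
  have := Submodule.finrank_sup_add_finrank_inf_eq (Submodule.span ℚ S) (Submodule.span ℚ T)
  rw [hinf] at this
  simp only [finrank_bot, add_zero] at this
  rw [← this]
  calc Module.finrank ℚ ↥(Submodule.span ℚ S ⊔ Submodule.span ℚ T)
      ≤ Module.finrank ℚ (X → ℚ) := Submodule.finrank_le _
    _ = Fintype.card X := Module.finrank_pi ℚ

lemma card_le_finrank_span {κ : Type*} [Fintype κ] {v : κ → (X → ℚ)}
    (hv : LinearIndependent ℚ v) {U : Submodule ℚ (X → ℚ)} (hmem : ∀ a, v a ∈ U) :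
    Fintype.card κ ≤ Module.finrank ℚ ↥U := by
  have h2 : LinearIndependent ℚ (fun a => (⟨v a, hmem a⟩ : U)) :=
    LinearIndependent.of_comp U.subtype (by convert hv; rfl)
  exact h2.fintype_card_le_finrank

end LinAlg

/-! ### Lexicographic minimality -/

/-- an explicit linear order on lexicographic functions (the instance is hard for
typeclass resolution with a variable `n`) -/
noncomputable def lexLO (n : ℕ) : LinearOrder (Lex (Fin n → Fin n)) :=
  @linearOrderOfSTO (Lex (∀ _ : Fin n, Fin n)) (· < ·)
    { trichotomous := (Pi.isTrichotomous_lex _ _ IsWellFounded.wf).1 } (Classical.decRel _)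

lemma min_lex {n : ℕ} {κ : Type*} (v v0 : Equiv.Perm (Fin n)) (β : Fin n → κ)
    (H1 : ∀ i j, i < j → β i = β j → v0 i < v0 j)
    (H2 : ∀ i, ∃ j, β j = β i ∧ v i = v0 j)
    (hne : v ≠ v0) :
    toLex (⇑v0) < toLex (⇑v) := by
  classical
  have hex : (Finset.univ.filter fun i => v0 i ≠ v i).Nonempty := by
    by_contra h
    rw [Finset.not_nonempty_iff_eq_empty, Finset.filter_eq_empty_iff] at h
    exact hne (Equiv.ext fun i => by
      by_contra hc
      exact (h (Finset.mem_univ i)) (fun hh => hc hh.symm))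
  set D := Finset.univ.filter fun i => v0 i ≠ v i with hD
  obtain ⟨i, hiD, himin⟩ := Finset.exists_min_image D id hex
  have hieq : ∀ j, j < i → v0 j = v j := by
    intro j hj
    by_contra hc
    have : j ∈ D := by rw [hD]; exact Finset.mem_filter.2 ⟨Finset.mem_univ j, hc⟩
    exact absurd (himin j this) (not_le.2 hj)
  have hine : v0 i ≠ v i := (Finset.mem_filter.1 hiD).2
  obtain ⟨j, hβ, hvj⟩ := H2 i
  have hlt : v0 i < v i := by
    rcases lt_trichotomy j i with hj | rfl | hj
    · exfalso
      have : v i = v j := by rw [hvj, hieq j hj]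
      exact absurd (v.injective this.symm) (ne_of_lt hj)
    · exact absurd hvj.symm hine
    · rw [hvj]
      exact H1 i j hj hβ.symm
  exact ⟨i, fun j hj => hieq j hj, hlt⟩

/-! ### The decreasing-subsequence statistic -/

variable {n : ℕ}

/-- length of the longest decreasing subsequence ending at position `i` -/
def cf (w : Equiv.Perm (Fin n)) (i : Fin n) : ℕ :=
  ((Finset.univ.filter fun j => j < i ∧ w i < w j).attach.sup
    fun j => cf w j.1) + 1
termination_by i.val
decreasing_by
  exact (Finset.mem_filter.1 j.2).2.1

lemma cf_pos (w : Equiv.Perm (Fin n)) (i : Fin n) : 1 ≤ cf w i := by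
  rw [cf]; omega

lemma cf_lt (w : Equiv.Perm (Fin n)) {i j : Fin n} (h : i < j) (hw : w j < w i) :
    cf w i < cf w j := by
  conv_rhs => rw [cf]
  have hmem : i ∈ Finset.univ.filter fun j' => j' < j ∧ w j < w j' :=
    Finset.mem_filter.2 ⟨Finset.mem_univ i, h, hw⟩
  have := Finset.le_sup (f := fun j' : {x // x ∈ Finset.univ.filter fun j' => j' < j ∧ w j < w j'} => cf w j'.1)
    (Finset.mem_attach _ ⟨i, hmem⟩)
  dsimp only at this
  omega

lemma cf_step (w : Equiv.Perm (Fin n)) {i : Fin n} (h2 : 2 ≤ cf w i) :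
    ∃ j, j < i ∧ w i < w j ∧ cf w i = cf w j + 1 := by
  have hne : ((Finset.univ.filter fun j => j < i ∧ w i < w j).attach).Nonempty := by
    by_contra h
    rw [Finset.not_nonempty_iff_eq_empty] at h
    rw [cf, h, Finset.sup_empty] at h2
    simp only [Nat.bot_eq_zero] at h2
    omega
  obtain ⟨j, _, hj⟩ := Finset.exists_mem_eq_sup _ hne
    (fun j : {x // x ∈ Finset.univ.filter fun j => j < i ∧ w i < w j} => cf w j.1)
  have hmem := Finset.mem_filter.1 j.2
  refine ⟨j.1, hmem.2.1, hmem.2.2, ?_⟩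
  conv_lhs => rw [cf]
  omega

lemma cf_le_three {w : Equiv.Perm (Fin n)} (hA : Avoids4321 w) (i : Fin n) : cf w i ≤ 3 := by
  by_contra h
  push_neg at h
  obtain ⟨j2, hj2i, hw2, hc2⟩ := cf_step w (by omega : 2 ≤ cf w i)
  obtain ⟨j3, hj32, hw3, hc3⟩ := cf_step w (by omega : 2 ≤ cf w j2)
  obtain ⟨j4, hj43, hw4, hc4⟩ := cf_step w (by omega : 2 ≤ cf w j3)
  exact hA ⟨j4, j3, j2, i, hj43, hj32, hj2i, hw4, hw3, hw2⟩

/-- the canonical triple datum attached to a `4321`-avoiding permutation -/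
def tdOf (w : Equiv.Perm (Fin n)) (hA : Avoids4321 w) : TD n where
  k m := (Finset.univ.filter fun i => cf w i = m.val + 1).card
  I m := Finset.univ.filter fun i => cf w i = m.val + 1
  J m := (Finset.univ.filter fun i => cf w i = m.val + 1).image w
  hI m := rfl
  hJ m := Finset.card_image_of_injective _ w.injective
  hIu := by
    ext i
    simp only [Finset.mem_union, Finset.mem_filter, Finset.mem_univ, true_and, iff_true]
    have h1 := cf_pos w i
    have h2 := cf_le_three hA i
    omega
  hJu := by
    rw [← Finset.image_union, ← Finset.image_union]
    have : (Finset.univ.filter fun i => cf w i = 1) ∪ (Finset.univ.filter fun i => cf w i = 2)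
        ∪ (Finset.univ.filter fun i => cf w i = 3) = Finset.univ := by
      ext i
      simp only [Finset.mem_union, Finset.mem_filter, Finset.mem_univ, true_and, iff_true]
      have h1 := cf_pos w i
      have h2 := cf_le_three hA i
      omega
    rw [show ((0 : Fin 3).val + 1) = 1 from rfl, show ((1 : Fin 3).val + 1) = 2 from rfl,
      show ((2 : Fin 3).val + 1) = 3 from rfl, this]
    ext x
    simp only [Finset.mem_image, Finset.mem_univ, iff_true]
    exact ⟨w.symm x, trivial, w.apply_symm_apply x⟩
  dI := by
    intro m m' hne
    rw [Finset.disjoint_left]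
    intro x hx hx'
    rw [Finset.mem_filter] at hx hx'
    exact hne (Fin.ext (by omega))
  dJ := by
    intro m m' hne
    rw [Finset.disjoint_image w.injective, Finset.disjoint_left]
    intro x hx hx'
    rw [Finset.mem_filter] at hx hx'
    exact hne (Fin.ext (by omega))

lemma tdOf_compat (w : Equiv.Perm (Fin n)) (hA : Avoids4321 w) :
    (tdOf w hA).Compat w := by
  intro m x hx
  exact Finset.mem_image_of_mem w hx

lemma tdOf_min {w : Equiv.Perm (Fin n)} {hA : Avoids4321 w} {v : Equiv.Perm (Fin n)}
    (hc : (tdOf w hA).Compat v) (hne : v ≠ w) : toLex (⇑w) < toLex (⇑v) := by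
  refine min_lex v w (cf w) ?_ ?_ hne
  · intro i j hij hcf
    rcases lt_trichotomy (w i) (w j) with h | h | h
    · exact h
    · exact absurd (w.injective h) (ne_of_lt hij)
    · exact absurd hcf (ne_of_lt (cf_lt w hij h))
  · intro i
    have h1 := cf_pos w i
    have h2 := cf_le_three hA i
    set m : Fin 3 := ⟨cf w i - 1, by omega⟩ with hm
    have hmem : i ∈ (tdOf w hA).I m := by
      simp only [tdOf, Finset.mem_filter, Finset.mem_univ, true_and, hm]
      omega
    have := hc m i hmem
    simp only [tdOf, Finset.mem_image, Finset.mem_filter, Finset.mem_univ, true_and] at this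
    obtain ⟨j, hj, hvj⟩ := this
    refine ⟨j, ?_, hvj.symm⟩
    have : i ∈ (Finset.univ.filter fun i' => cf w i' = m.val + 1) := hmem
    rw [Finset.mem_filter] at this
    omega

/-! ### The orthogonal family of coset-indicator vectors -/

/-- `w` has an increasing subsequence of length 4 -/
def HasIncr4 (w : Equiv.Perm (Fin n)) : Prop :=
  ∃ i1 i2 i3 i4 : Fin n, i1 < i2 ∧ i2 < i3 ∧ i3 < i4 ∧
    w i1 < w i2 ∧ w i2 < w i3 ∧ w i3 < w i4

lemma exists_P {w : Equiv.Perm (Fin n)} (h : HasIncr4 w) :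
    ∃ P : Finset (Fin n), P.card = 4 ∧ ∀ i ∈ P, ∀ j ∈ P, i < j → w i < w j := by
  obtain ⟨a, b, c, d, hab, hbc, hcd, w1, w2, w3⟩ := h
  have hac : a < c := lt_trans hab hbc
  have had : a < d := lt_trans hac hcd
  have hbd : b < d := lt_trans hbc hcd
  have w12 : w a < w c := lt_trans w1 w2
  have w23 : w b < w d := lt_trans w2 w3
  have w13 : w a < w d := lt_trans w12 w3
  refine ⟨{a, b, c, d}, ?_, ?_⟩
  · rw [Finset.card_insert_of_notMem (by simp [ne_of_lt hab, ne_of_lt hac, ne_of_lt had]),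
      Finset.card_insert_of_notMem (by simp [ne_of_lt hbc, ne_of_lt hbd]),
      Finset.card_insert_of_notMem (by simp [ne_of_lt hcd]), Finset.card_singleton]
  · intro i hi j hj hij
    simp only [Finset.mem_insert, Finset.mem_singleton] at hi hj
    rcases hi with rfl | rfl | rfl | rfl <;> rcases hj with rfl | rfl | rfl | rfl <;>
      first
      | exact absurd hij (lt_irrefl _)
      | exact w1 | exact w2 | exact w3 | exact w12 | exact w23 | exact w13
      | exact absurd hij (not_lt.2 hab.le)
      | exact absurd hij (not_lt.2 hbc.le)
      | exact absurd hij (not_lt.2 hcd.le)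
      | exact absurd hij (not_lt.2 hac.le)
      | exact absurd hij (not_lt.2 had.le)
      | exact absurd hij (not_lt.2 hbd.le)

/-- the set of permutations agreeing with `w` off `P` -/
def CC (w : Equiv.Perm (Fin n)) (P : Finset (Fin n)) : Finset (Equiv.Perm (Fin n)) :=
  Finset.univ.filter fun v => ∀ i ∉ P, v i = w i

/-- indicator vector of `CC w P` -/
def yvec (w : Equiv.Perm (Fin n)) (P : Finset (Fin n)) : Equiv.Perm (Fin n) → ℚ :=
  fun v => if v ∈ CC w P then 1 else 0

lemma self_mem_CC (w : Equiv.Perm (Fin n)) (P : Finset (Fin n)) : w ∈ CC w P :=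
  Finset.mem_filter.2 ⟨Finset.mem_univ _, fun _ _ => rfl⟩

/-- pigeonhole: a 4-element set meets some block twice -/
lemma pigeonhole (t : TD n) {P : Finset (Fin n)} (hP : P.card = 4) :
    ∃ m : Fin 3, ∃ p ∈ P ∩ t.I m, ∃ p' ∈ P ∩ t.I m, p ≠ p' := by
  by_contra hcon
  push_neg at hcon
  have hcard : ∀ m, (P ∩ t.I m).card ≤ 1 := by
    intro m
    by_contra h
    push_neg at h
    obtain ⟨p, hp, p', hp', hne⟩ := Finset.one_lt_card.1 h
    exact hne (hcon m p hp p' hp')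
  have hsub : P ⊆ (P ∩ t.I 0) ∪ (P ∩ t.I 1) ∪ (P ∩ t.I 2) := by
    intro x hx
    obtain ⟨m, hm⟩ := t.blk_exists x
    fin_cases m
    · exact Finset.mem_union.2 (Or.inl (Finset.mem_union.2 (Or.inl (Finset.mem_inter.2 ⟨hx, hm⟩))))
    · exact Finset.mem_union.2 (Or.inl (Finset.mem_union.2 (Or.inr (Finset.mem_inter.2 ⟨hx, hm⟩))))
    · exact Finset.mem_union.2 (Or.inr (Finset.mem_inter.2 ⟨hx, hm⟩))
  have hle := Finset.card_le_card hsub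
  have h1 := Finset.card_union_le ((P ∩ t.I 0) ∪ (P ∩ t.I 1)) (P ∩ t.I 2)
  have h2 := Finset.card_union_le (P ∩ t.I 0) (P ∩ t.I 1)
  have := hcard 0; have := hcard 1; have := hcard 2
  omega

/-- the key orthogonality: coset indicators annihilate all triple products -/
lemma sum_CC_phi_eq_zero (t : TD n) (w : Equiv.Perm (Fin n)) {P : Finset (Fin n)}
    (hP : P.card = 4) :
    ∑ v ∈ CC w P, phi n t.poly v = 0 := by
  obtain ⟨m, p, hp, p', hp', hne⟩ := pigeonhole t hP
  have hpP := (Finset.mem_inter.1 hp).1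
  have hpI := (Finset.mem_inter.1 hp).2
  have hp'P := (Finset.mem_inter.1 hp').1
  have hp'I := (Finset.mem_inter.1 hp').2
  refine Finset.sum_involution (fun v _ => v * Equiv.swap p p') ?_ ?_ ?_ ?_
  · intro v _
    rw [t.phi_poly_mul_swap v hpI hp'I hne, add_neg_cancel]
  · intro v _ _
    intro hcon
    have : Equiv.swap p p' = 1 := by
      have := congrArg (fun z => v⁻¹ * z) hcon
      simpa [← mul_assoc] using this
    have h2 : p' = p := by
      have := congrArg (fun e : Equiv.Perm (Fin n) => e p) this
      simpa [Equiv.swap_apply_left] using this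
    exact hne h2.symm
  · intro v hv
    simp only [CC, Finset.mem_filter] at hv ⊢
    refine ⟨Finset.mem_univ _, fun i hi => ?_⟩
    have hip : i ≠ p := fun hh => hi (hh ▸ hpP)
    have hip' : i ≠ p' := fun hh => hi (hh ▸ hp'P)
    rw [Equiv.Perm.mul_apply, Equiv.swap_apply_of_ne_of_ne hip hip']
    exact hv.2 i hi
  · intro v _
    show v * Equiv.swap p p' * Equiv.swap p p' = v
    rw [mul_assoc, Equiv.swap_mul_self, mul_one]

/-- minimality of an increasing-on-`P` permutation in its coset -/
lemma CC_min {w : Equiv.Perm (Fin n)} {P : Finset (Fin n)}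
    (hmono : ∀ i ∈ P, ∀ j ∈ P, i < j → w i < w j) {v : Equiv.Perm (Fin n)}
    (hv : v ∈ CC w P) (hne : v ≠ w) : toLex (⇑w) < toLex (⇑v) := by
  classical
  have hvoff := (Finset.mem_filter.1 hv).2
  refine min_lex v w (fun i => if i ∈ P then (0 : ℕ) else i.val + 1) ?_ ?_ hne
  · intro i j hij hβ
    by_cases hiP : i ∈ P <;> by_cases hjP : j ∈ P
    · exact hmono i hiP j hjP hij
    · rw [if_pos hiP, if_neg hjP] at hβ; omega
    · rw [if_neg hiP, if_pos hjP] at hβ; omega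
    · rw [if_neg hiP, if_neg hjP] at hβ
      have : i = j := Fin.ext (by omega)
      exact absurd this (ne_of_lt hij)
  · intro i
    by_cases hiP : i ∈ P
    · refine ⟨w.symm (v i), ?_, (w.apply_symm_apply (v i)).symm⟩
      have hmem : w.symm (v i) ∈ P := by
        by_contra hc
        have h1 := hvoff _ hc
        have h2 : v (w.symm (v i)) = v i := by rw [h1, w.apply_symm_apply]
        have h3 := v.injective h2
        rw [h3] at hc
        exact hc hiP
      rw [if_pos hmem, if_pos hiP]
    · exact ⟨i, rfl, hvoff i hiP⟩

/-! ### Counting: `4321`-avoiding vs no increasing `4`-subsequence -/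

noncomputable instance : DecidablePred (Avoids4321 (n := n)) := fun w => by
  unfold Avoids4321; infer_instance

noncomputable instance : DecidablePred (HasIncr4 (n := n)) := fun w => by
  unfold HasIncr4; infer_instance

lemma hasIncr4_mulRev_iff (w : Equiv.Perm (Fin n)) :
    HasIncr4 (w * Fin.revPerm) ↔ ¬ Avoids4321 w := by
  rw [Avoids4321, not_not]
  constructor
  · rintro ⟨i1, i2, i3, i4, h12, h23, h34, v12, v23, v34⟩
    refine ⟨i4.rev, i3.rev, i2.rev, i1.rev, Fin.rev_lt_rev.2 h34, Fin.rev_lt_rev.2 h23,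
      Fin.rev_lt_rev.2 h12, ?_, ?_, ?_⟩ <;>
      simpa [Equiv.Perm.mul_apply, Fin.revPerm_apply, Fin.rev_rev] using ‹_›
  · rintro ⟨j1, j2, j3, j4, h12, h23, h34, v21, v32, v43⟩
    refine ⟨j4.rev, j3.rev, j2.rev, j1.rev, Fin.rev_lt_rev.2 h34, Fin.rev_lt_rev.2 h23,
      Fin.rev_lt_rev.2 h12, ?_, ?_, ?_⟩ <;>
      simpa [Equiv.Perm.mul_apply, Fin.revPerm_apply, Fin.rev_rev] using ‹_›

lemma card_avoids_eq :
    Fintype.card {w : Equiv.Perm (Fin n) // Avoids4321 w}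
      = Fintype.card {w : Equiv.Perm (Fin n) // ¬ HasIncr4 w} := by
  refine Fintype.card_congr (Equiv.subtypeEquiv (Equiv.mulRight Fin.revPerm) fun w => ?_)
  rw [Equiv.coe_mulRight]
  dsimp only
  rw [hasIncr4_mulRev_iff, not_not]

/-! ### The section of `phi` -/

noncomputable def G (n : ℕ) : (Equiv.Perm (Fin n) → ℚ) →ₗ[ℚ] MvPolynomial (Fin n × Fin n) ℚ :=
  Fintype.linearCombination ℚ (mono (n := n))

lemma phi_G (c : Equiv.Perm (Fin n) → ℚ) : phi n (G n c) = c := by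
  classical
  funext w
  rw [G, Fintype.linearCombination_apply, map_sum]
  rw [Finset.sum_apply]
  rw [Finset.sum_eq_single w]
  · rw [map_smul, Pi.smul_apply, phi_mono, if_pos rfl, smul_eq_mul, mul_one]
  · intro v _ hvw
    rw [map_smul, Pi.smul_apply, phi_mono, if_neg hvw, smul_eq_mul, mul_zero]
  · intro h; exact absurd (Finset.mem_univ w) h

lemma mono_mem_range_G (v : Equiv.Perm (Fin n)) : mono v ∈ LinearMap.range (G n) := by
  classical
  refine ⟨Pi.single v 1, ?_⟩
  rw [G, Fintype.linearCombination_apply]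
  rw [Finset.sum_eq_single v]
  · rw [Pi.single_eq_same, one_smul]
  · intro u _ huv
    rw [Pi.single_eq_of_ne huv, zero_smul]
  · intro h; exact absurd (Finset.mem_univ v) h

/-- triple datum from the data in the definition of `TripleMinorProducts` -/
def mkTD {k1 k2 k3 : ℕ} {I1 I2 I3 J1 J2 J3 : Finset (Fin n)}
    (hI1 : I1.card = k1) (hJ1 : J1.card = k1) (hI2 : I2.card = k2) (hJ2 : J2.card = k2)
    (hI3 : I3.card = k3) (hJ3 : J3.card = k3)
    (hIu : I1 ∪ I2 ∪ I3 = Finset.univ) (dI12 : Disjoint I1 I2) (dI13 : Disjoint I1 I3)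
    (dI23 : Disjoint I2 I3)
    (hJu : J1 ∪ J2 ∪ J3 = Finset.univ) (dJ12 : Disjoint J1 J2) (dJ13 : Disjoint J1 J3)
    (dJ23 : Disjoint J2 J3) : TD n where
  k := ![k1, k2, k3]
  I := ![I1, I2, I3]
  J := ![J1, J2, J3]
  hI := by intro m; fin_cases m <;> simpa using ‹_›
  hJ := by intro m; fin_cases m <;> simpa using ‹_›
  hIu := by simpa using hIu
  hJu := by simpa using hJu
  dI := by
    intro m m' hne
    fin_cases m <;> fin_cases m' <;>
      first
        | exact absurd rfl hne
        | simpa using dI12 | simpa using dI12.symm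
        | simpa using dI13 | simpa using dI13.symm
        | simpa using dI23 | simpa using dI23.symm
  dJ := by
    intro m m' hne
    fin_cases m <;> fin_cases m' <;>
      first
        | exact absurd rfl hne
        | simpa using dJ12 | simpa using dJ12.symm
        | simpa using dJ13 | simpa using dJ13.symm
        | simpa using dJ23 | simpa using dJ23.symm

lemma mkTD_poly {k1 k2 k3 : ℕ} {I1 I2 I3 J1 J2 J3 : Finset (Fin n)}
    (hI1 : I1.card = k1) (hJ1 : J1.card = k1) (hI2 : I2.card = k2) (hJ2 : J2.card = k2)
    (hI3 : I3.card = k3) (hJ3 : J3.card = k3)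
    (hIu : I1 ∪ I2 ∪ I3 = Finset.univ) (dI12 : Disjoint I1 I2) (dI13 : Disjoint I1 I3)
    (dI23 : Disjoint I2 I3)
    (hJu : J1 ∪ J2 ∪ J3 = Finset.univ) (dJ12 : Disjoint J1 J2) (dJ13 : Disjoint J1 J3)
    (dJ23 : Disjoint J2 J3) :
    (mkTD hI1 hJ1 hI2 hJ2 hI3 hJ3 hIu dI12 dI13 dI23 hJu dJ12 dJ13 dJ23).poly
      = genMinor I1 J1 hI1 hJ1 * genMinor I2 J2 hI2 hJ2 * genMinor I3 J3 hI3 hJ3 := rfl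

lemma span_TMP_le_range_G :
    Submodule.span ℚ (TripleMinorProducts n) ≤ LinearMap.range (G n) := by
  rw [Submodule.span_le]
  rintro p ⟨k1, k2, k3, I1, I2, I3, J1, J2, J3, hI1, hJ1, hI2, hJ2, hI3, hJ3,
    hIu, dI12, dI13, dI23, hJu, dJ12, dJ13, dJ23, rfl⟩
  have h1 : Submodule.span ℚ (Set.range (mono (n := n))) ≤ LinearMap.range (G n) := by
    rw [Submodule.span_le]
    rintro x ⟨v, rfl⟩
    exact mono_mem_range_G v
  have := (mkTD hI1 hJ1 hI2 hJ2 hI3 hJ3 hIu dI12 dI13 dI23 hJu dJ12 dJ13 dJ23).poly_mem_span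
  rw [mkTD_poly] at this
  exact h1 this

lemma finrank_V_eq_map :
    Module.finrank ℚ ↥(Submodule.span ℚ (TripleMinorProducts n))
      = Module.finrank ℚ ↥((Submodule.span ℚ (TripleMinorProducts n)).map (phi n)) := by
  set V := Submodule.span ℚ (TripleMinorProducts n)
  have hker : ∀ x ∈ V, phi n x = 0 → x = 0 := by
    intro x hx hphi
    obtain ⟨c, rfl⟩ := span_TMP_le_range_G hx
    rw [phi_G] at hphi
    rw [hphi, map_zero]
  have hinj : Function.Injective ((phi n).domRestrict V) := by
    intro a b hab
    have h1 : (a : MvPolynomial (Fin n × Fin n) ℚ) - b ∈ V := sub_mem a.2 b.2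
    have h2 : phi n ((a : MvPolynomial (Fin n × Fin n) ℚ) - b) = 0 := by
      rw [map_sub]
      rw [sub_eq_zero]
      exact hab
    have h3 := hker _ h1 h2
    rw [sub_eq_zero] at h3
    exact Subtype.ext h3
  rw [← LinearMap.range_domRestrict V (phi n)]
  exact (LinearEquiv.ofInjective _ hinj).finrank_eq

lemma TD.poly_mem_TMP (t : TD n) : t.poly ∈ TripleMinorProducts n :=
  ⟨t.k 0, t.k 1, t.k 2, t.I 0, t.I 1, t.I 2, t.J 0, t.J 1, t.J 2,
    t.hI 0, t.hJ 0, t.hI 1, t.hJ 1, t.hI 2, t.hJ 2,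
    t.hIu, t.dI 0 1 (by decide), t.dI 0 2 (by decide), t.dI 1 2 (by decide),
    t.hJu, t.dJ 0 1 (by decide), t.dJ 0 2 (by decide), t.dJ 1 2 (by decide), rfl⟩

end RS

/-- The linear span of all products of triples of complementary minors of the generic
`n × n` matrix has dimension equal to the number of `4321`-avoiding permutations. -/
theorem stmt_11 (n : ℕ) :
    Module.finrank ℚ ↥(Submodule.span ℚ (TripleMinorProducts n)) =
      Nat.card {w : Equiv.Perm (Fin n) // Avoids4321 w} := by
  classical
  letI : LinearOrder (Lex (Fin n → Fin n)) := RS.lexLO n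
  rw [RS.finrank_V_eq_map, Nat.card_eq_fintype_card]
  set Vh := (Submodule.span ℚ (TripleMinorProducts n)).map (RS.phi n) with hVh
  -- the orthogonal family of coset indicators, one for each permutation with an
  -- increasing subsequence of length 4
  have hPall : ∀ a : {w : Equiv.Perm (Fin n) // RS.HasIncr4 w}, ∃ Q : Finset (Fin n),
      Q.card = 4 ∧ ∀ i ∈ Q, ∀ j ∈ Q, i < j → a.1 i < a.1 j := fun a => RS.exists_P a.2
  choose P hP4 hPmono using hPall
  set yfam : {w : Equiv.Perm (Fin n) // RS.HasIncr4 w} → (Equiv.Perm (Fin n) → ℚ) :=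
    fun a => RS.yvec a.1 (P a) with hyfam
  have hLIy : LinearIndependent ℚ yfam := by
    refine RS.linIndep_of_leading (L := Lex (Fin n → Fin n))
      (fun w : Equiv.Perm (Fin n) => toLex ⇑w)
      (fun a b h => Equiv.coe_fn_injective (toLex.injective h))
      yfam (fun a => a.1) Subtype.val_injective ?_ ?_
    · intro a
      show (if a.1 ∈ RS.CC a.1 (P a) then (1 : ℚ) else 0) ≠ 0
      rw [if_pos (RS.self_mem_CC _ _)]
      exact one_ne_zero
    · intro a x hx
      by_contra h0
      have hxCC : x ∈ RS.CC a.1 (P a) := by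
        by_contra hc
        exact h0 (by simp [hyfam, RS.yvec, hc])
      rcases eq_or_ne x a.1 with rfl | hne
      · exact lt_irrefl _ hx
      · exact absurd hx (lt_asymm (RS.CC_min (hPmono a) hxCC hne))
  have hK4 : Fintype.card {w : Equiv.Perm (Fin n) // RS.HasIncr4 w}
      ≤ Module.finrank ℚ ↥(Submodule.span ℚ (Set.range yfam)) :=
    RS.card_le_finrank_span hLIy (fun a => Submodule.subset_span ⟨a, rfl⟩)
  -- orthogonality
  have horth : ∀ u ∈ Set.range yfam, ∀ x ∈ (RS.phi n '' TripleMinorProducts n),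
      RS.dotq u x = 0 := by
    rintro u ⟨a, rfl⟩ x ⟨p, hp, rfl⟩
    obtain ⟨k1, k2, k3, I1, I2, I3, J1, J2, J3, hI1, hJ1, hI2, hJ2, hI3, hJ3,
      hIu, dI12, dI13, dI23, hJu, dJ12, dJ13, dJ23, rfl⟩ := hp
    rw [← RS.mkTD_poly hI1 hJ1 hI2 hJ2 hI3 hJ3 hIu dI12 dI13 dI23 hJu dJ12 dJ13 dJ23]
    have hsum := RS.sum_CC_phi_eq_zero
      (RS.mkTD hI1 hJ1 hI2 hJ2 hI3 hJ3 hIu dI12 dI13 dI23 hJu dJ12 dJ13 dJ23) a.1 (hP4 a)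
    rw [RS.dotq]
    rw [RS.CC] at hsum
    rw [Finset.sum_filter] at hsum
    rw [← hsum]
    refine Finset.sum_congr rfl fun v _ => ?_
    show (if v ∈ RS.CC a.1 (P a) then (1 : ℚ) else 0) * _ = _
    simp only [RS.CC, Finset.mem_filter, Finset.mem_univ, true_and]
    by_cases hvC : ∀ i ∉ P a, v i = a.1 i
    · rw [if_pos hvC, if_pos hvC, one_mul]
    · rw [if_neg hvC, if_neg hvC, zero_mul]
  have horthsum := RS.finrank_add_finrank_le_card horth
  have hVhspan : Vh = Submodule.span ℚ (RS.phi n '' TripleMinorProducts n) :=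
    Submodule.map_span _ _
  -- the independent family inside the span, one for each 4321-avoiding permutation
  set lfam : {w : Equiv.Perm (Fin n) // Avoids4321 w} → (Equiv.Perm (Fin n) → ℚ) :=
    fun a => RS.phi n (RS.tdOf a.1 a.2).poly with hlfam
  have hLIl : LinearIndependent ℚ lfam := by
    refine RS.linIndep_of_leading (L := Lex (Fin n → Fin n))
      (fun w : Equiv.Perm (Fin n) => toLex ⇑w)
      (fun a b h => Equiv.coe_fn_injective (toLex.injective h))
      lfam (fun a => a.1) Subtype.val_injective ?_ ?_
    · intro a
      exact (RS.tdOf a.1 a.2).phi_poly_ne_zero (RS.tdOf_compat a.1 a.2)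
    · intro a x hx
      by_contra h0
      have hcomp : (RS.tdOf a.1 a.2).Compat x := by
        by_contra hc
        exact h0 ((RS.tdOf a.1 a.2).phi_poly_eq_zero hc)
      rcases eq_or_ne x a.1 with rfl | hne
      · exact lt_irrefl _ hx
      · exact absurd hx (lt_asymm (RS.tdOf_min hcomp hne))
  have hmeml : ∀ a, lfam a ∈ Vh := fun a =>
    Submodule.mem_map_of_mem (Submodule.subset_span ((RS.tdOf a.1 a.2).poly_mem_TMP))
  have hA4 : Fintype.card {w : Equiv.Perm (Fin n) // Avoids4321 w}
      ≤ Module.finrank ℚ ↥Vh := RS.card_le_finrank_span hLIl hmeml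
  -- counting
  have hcompl : Fintype.card {w : Equiv.Perm (Fin n) // ¬ RS.HasIncr4 w}
      = Fintype.card (Equiv.Perm (Fin n))
        - Fintype.card {w : Equiv.Perm (Fin n) // RS.HasIncr4 w} :=
    Fintype.card_subtype_compl _
  have hcd := RS.card_avoids_eq (n := n)
  have hle := Fintype.card_subtype_le (RS.HasIncr4 (n := n))
  rw [← hVhspan] at horthsum
  omega
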